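/- Let A and B be unital C*-algebras and τ a tracial state on a C*-tensor product A ⊗ B. If the restriction of τ to 1 ⊗ B is an extreme point of the tracial state space of B, then τ(a ⊗ b) = τ(a ⊗ 1)·τ(1 ⊗ b) for all a ∈ A and b ∈ B. -/

import Mathlib

open scoped ComplexOrder

/-- A tracial state on a unital C*-algebra: a positive normalized linear functional
with the trace property. -/
def IsTracialState {A : Type*} [NormedRing A] [StarRing A] [NormedAlgebra ℂ A]
    (τ : A →ₗ[ℂ] ℂ) : Prop :=
  τ 1 = 1 ∧ (∀ a : A, 0 ≤ τ (star a * a)) ∧ ∀ a b : A, τ (a * b) = τ (b * a)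

/-- A tracial state is extremal if it is an extreme point of the tracial state space:
any way of writing it as a proper convex combination of tracial states is trivial. -/
def IsExtremeTracialState {A : Type*} [NormedRing A] [StarRing A] [NormedAlgebra ℂ A]
    (τ : A →ₗ[ℂ] ℂ) : Prop :=
  IsTracialState τ ∧ ∀ τ₁ τ₂ : A →ₗ[ℂ] ℂ, IsTracialState τ₁ → IsTracialState τ₂ →
    ∀ c : ℝ, 0 < c → c < 1 →
      (∀ x : A, τ x = (c : ℂ) * τ₁ x + ((1 : ℂ) - c) * τ₂ x) → τ₁ = τ₂

section Aux
variable {C : Type*} [NonUnitalNonAssocSemiring C] [StarRing C] [Module ℂ C] [StarModule ℂ C]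
 [SMulCommClass ℂ C C] [IsScalarTower ℂ C C]

lemma herm (τ : C →ₗ[ℂ] ℂ) (hpos : ∀ x : C, 0 ≤ τ (star x * x)) (u v : C) :
    τ (star v * u) = (starRingEnd ℂ) (τ (star u * v))  := by
  have key : ∀ z : C, (starRingEnd ℂ) (τ (star z * z)) = τ (star z * z) := by
    intro z
    have h := hpos z
    rw [Complex.nonneg_iff] at h
    exact Complex.conj_eq_iff_im.mpr h.2.symm
  set s := τ (star u * v) with hs
  set t := τ (star v * u) with ht
  have e1 : τ (star (u + v) * (u + v)) = τ (star u * u) + τ (star v * v) + (s + t) := by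
    simp only [star_add, add_mul, mul_add, map_add, hs, ht]; ring
  have e2 : τ (star (u + Complex.I • v) * (u + Complex.I • v))
      = τ (star u * u) + τ (star v * v) + Complex.I * (s - t) := by
    simp only [star_add, star_smul, Complex.star_def, Complex.conj_I, add_mul, mul_add,
      map_add, neg_smul, smul_mul_assoc, mul_smul_comm, map_smul, map_neg, smul_smul,
      smul_eq_mul, hs, ht]
    ring_nf
    rw [Complex.I_sq]
    ring
  have h1 := key (u + v)
  have h2 := key (u + Complex.I • v)
  rw [e1] at h1; rw [e2] at h2
  simp only [map_add, map_mul, key u, key v, Complex.conj_I, map_sub] at h1 h2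
  have c1 : (starRingEnd ℂ) s + (starRingEnd ℂ) t = s + t := by
    linear_combination h1
  have c2 : (starRingEnd ℂ) t - (starRingEnd ℂ) s = s - t := by
    linear_combination (-Complex.I) * h2 + (-((starRingEnd ℂ) s - (starRingEnd ℂ) t) - (s - t)) * Complex.I_mul_I
  have c3 : (starRingEnd ℂ) t = s := by linear_combination (c1 + c2) / 2
  rw [← c3, Complex.conj_conj]

lemma cs_zero (τ : C →ₗ[ℂ] ℂ) (hpos : ∀ x : C, 0 ≤ τ (star x * x)) {x : C}
    (hx : τ (star x * x) = 0) (y : C) : τ (star x * y) = 0 := by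
  by_contra hne
  set s := τ (star x * y) with hs
  set q := τ (star y * y) with hq
  have hq0 : 0 ≤ q := hpos y
  have him : q.im = 0 := ((Complex.nonneg_iff.mp hq0).2).symm
  have hqr : q = ((q.re : ℝ) : ℂ) := Complex.ext (by simp) (by simp [him])
  have expand : ∀ c : ℂ, τ (star (x + c • y) * (x + c • y))
      = c * s + (starRingEnd ℂ) c * (starRingEnd ℂ) s + (starRingEnd ℂ) c * c * q := by
    intro c
    simp only [star_add, star_smul, Complex.star_def, add_mul, mul_add, map_add,
      smul_mul_assoc, mul_smul_comm, map_smul, smul_smul, smul_eq_mul]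
    rw [herm τ hpos x y, hx, ← hs, ← hq]
    ring
  have key : ∀ r : ℝ, 0 ≤ ((-2 * r * Complex.normSq s + r^2 * Complex.normSq s * q.re : ℝ) : ℂ) := by
    intro r
    have h := hpos (x + ((-r : ℂ) * (starRingEnd ℂ) s) • y)
    rw [expand, hqr] at h
    convert h using 1
    simp only [map_mul, map_neg, Complex.conj_conj, Complex.conj_ofReal]
    push_cast
    linear_combination (2*(r:ℂ) - (r:ℂ)^2 * (q.re:ℂ)) * Complex.mul_conj s
  have hN : 0 < Complex.normSq s := Complex.normSq_pos.mpr hne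
  have hqre : 0 ≤ q.re := (Complex.nonneg_iff.mp hq0).1
  have := Complex.zero_le_real.mp (key ((q.re + 1)⁻¹))
  have hr : 0 < (q.re + 1)⁻¹ := by positivity
  have hr1 : (q.re + 1)⁻¹ * (q.re + 1) = 1 := inv_mul_cancel₀ (by positivity)
  nlinarith [mul_pos hr hN, mul_pos (mul_pos hr hr) hN, hr1]

lemma real_mul_nonneg {r : ℝ} (hr : 0 ≤ r) {w : ℂ} (hw : 0 ≤ w) : 0 ≤ (r : ℂ) * w := by
  rw [Complex.nonneg_iff] at hw ⊢
  obtain ⟨h1, h2⟩ := hw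
  constructor
  · simp only [Complex.mul_re, Complex.ofReal_re, Complex.ofReal_im, zero_mul, sub_zero]
    exact mul_nonneg hr h1
  · simp [Complex.mul_im, ← h2]

end Aux

section Main
variable {A B C : Type*} [CStarAlgebra A] [PartialOrder A] [StarOrderedRing A]
    [CStarAlgebra B] [CStarAlgebra C]

theorem main_aux (ιA : A →⋆ₐ[ℂ] C) (ιB : B →⋆ₐ[ℂ] C)
    (hcomm : ∀ (a : A) (b : B), ιA a * ιB b = ιB b * ιA a)
    (τ : C →ₗ[ℂ] ℂ) (hτ : IsTracialState τ)
    (hres : IsExtremeTracialState (τ ∘ₗ ιB.toAlgHom.toLinearMap)) :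
    ∀ (a : A) (b : B), τ (ιA a * ιB b) = τ (ιA a) * τ (ιB b) := by
  obtain ⟨hτ1, hτpos, hτtr⟩ := hτ
  -- rewrite star (ιA e) for selfadjoint e
  have hstarA : ∀ e : A, IsSelfAdjoint e → star (ιA e) = ιA e := by
    intro e he; rw [← map_star, he.star_eq]
  -- positivity of b ↦ τ (ιA (e*e) * ιB (star b * b))
  have hpos3 : ∀ (e : A), IsSelfAdjoint e → ∀ b : B,
      0 ≤ τ (ιA (e * e) * ιB (star b * b)) := by
    intro e he b
    have h1 : star (ιB b * ιA e) * (ιB b * ιA e) = ιA e * (ιB (star b * b) * ιA e) := by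
      rw [star_mul, ← map_star ιA, ← map_star ιB, he.star_eq, map_mul]
      simp only [mul_assoc]
    have h2 : τ (ιA (e * e) * ιB (star b * b))
        = τ (star (ιB b * ιA e) * (ιB b * ιA e)) :=
      calc τ (ιA (e * e) * ιB (star b * b))
          = τ (ιB (star b * b) * ιA (e * e)) := hτtr _ _
        _ = τ ((ιB (star b * b) * ιA e) * ιA e) := by rw [map_mul ιA e e, ← mul_assoc]
        _ = τ (ιA e * (ιB (star b * b) * ιA e)) := hτtr _ _
        _ = τ (star (ιB b * ιA e) * (ιB b * ιA e)) := by rw [h1]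
    rw [h2]
    exact hτpos _
  -- zero case via Cauchy-Schwarz
  have hzero : ∀ a : A, 0 ≤ a → τ (ιA a) = 0 → ∀ b : B, τ (ιA a * ιB b) = 0 := by
    intro a ha h0 b
    set c := CFC.sqrt a with hcdef
    have hcc : c * c = a := CFC.sqrt_mul_sqrt_self a ha
    have hcsa : IsSelfAdjoint c := IsSelfAdjoint.of_nonneg (CFC.sqrt_nonneg _)
    have hx : τ (star (ιA c) * ιA c) = 0 := by
      rw [hstarA c hcsa, ← map_mul, hcc, h0]
    have h := cs_zero τ hτpos hx (ιA c * ιB b)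
    rwa [hstarA c hcsa, ← mul_assoc, ← map_mul, hcc] at h
  -- nonnegativity of τ ∘ ιA on positives
  have hposA : ∀ a : A, 0 ≤ a → 0 ≤ τ (ιA a) := by
    intro a ha
    have hcc : CFC.sqrt a * CFC.sqrt a = a := CFC.sqrt_mul_sqrt_self a ha
    have hcsa : IsSelfAdjoint (CFC.sqrt a) := IsSelfAdjoint.of_nonneg (CFC.sqrt_nonneg _)
    have := hτpos (ιA (CFC.sqrt a))
    rwa [hstarA _ hcsa, ← map_mul, hcc] at this
  -- main case: 0 ≤ a ≤ 1
  have P : ∀ a : A, 0 ≤ a → a ≤ 1 → ∀ b : B, τ (ιA a * ιB b) = τ (ιA a) * τ (ιB b) := by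
    intro a ha hle b
    have ha' : (0:A) ≤ 1 - a := sub_nonneg.mpr hle
    have hsum : τ (ιA (1 - a)) = 1 - τ (ιA a) := by
      rw [map_sub, map_sub, map_one ιA, hτ1]
    have ht0 : 0 ≤ τ (ιA a) := hposA a ha
    have ht1 : 0 ≤ 1 - τ (ιA a) := hsum ▸ hposA _ ha'
    obtain ⟨r, hr0, htr, hr1⟩ : ∃ r : ℝ, 0 ≤ r ∧ τ (ιA a) = (r : ℂ) ∧ r ≤ 1 := by
      refine ⟨(τ (ιA a)).re, (Complex.nonneg_iff.mp ht0).1,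
        Complex.ext (by simp) (by simp [((Complex.nonneg_iff.mp ht0).2).symm]), ?_⟩
      have h' := (Complex.nonneg_iff.mp ht1).1
      simp only [Complex.sub_re, Complex.one_re] at h'
      linarith
    rcases eq_or_lt_of_le hr0 with hr0' | hr0'
    · -- r = 0
      have h0 : τ (ιA a) = 0 := by rw [htr, ← hr0']; simp
      rw [hzero a ha h0 b, h0, zero_mul]
    rcases eq_or_lt_of_le hr1 with hr1' | hr1'
    · -- r = 1
      have h0 : τ (ιA (1 - a)) = 0 := by rw [hsum, htr, hr1']; simp
      have h := hzero _ ha' h0 b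
      rw [map_sub, sub_mul, map_sub, map_one, one_mul, sub_eq_zero] at h
      rw [htr, hr1', ← h]
      simp
    · -- 0 < r < 1
      set S : C → (B →ₗ[ℂ] ℂ) := fun x => τ ∘ₗ LinearMap.mulLeft ℂ x ∘ₗ ιB.toAlgHom.toLinearMap with hSdef
      have hS : ∀ (x : C) (b' : B), S x b' = τ (x * ιB b') := fun x b' => rfl
      -- general construction of tracial states
      have mkTS : ∀ (e : A) (ρ : ℝ), 0 ≤ ρ → IsSelfAdjoint e →
          (ρ:ℂ) * τ (ιA (e * e)) = 1 → IsTracialState ((ρ:ℂ) • S (ιA (e * e))) := by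
        intro e ρ hρ he hnorm
        have htr' : ∀ b₁ b₂ : B, τ (ιA (e*e) * ιB (b₁ * b₂)) = τ (ιA (e*e) * ιB (b₂ * b₁)) := by
          intro b₁ b₂
          rw [map_mul ιB, ← mul_assoc, hτtr, ← mul_assoc, ← hcomm, mul_assoc, ← map_mul ιB]
        refine ⟨?_, ?_, ?_⟩
        · show (ρ:ℂ) • S (ιA (e*e)) 1 = 1
          rw [hS, map_one, mul_one, smul_eq_mul, hnorm]
        · intro b'
          show (0:ℂ) ≤ (ρ:ℂ) • S (ιA (e*e)) (star b' * b')
          rw [hS, smul_eq_mul]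
          exact real_mul_nonneg hρ (hpos3 e he b')
        · intro b₁ b₂
          show (ρ:ℂ) • S (ιA (e*e)) (b₁ * b₂) = (ρ:ℂ) • S (ιA (e*e)) (b₂ * b₁)
          rw [hS, hS, smul_eq_mul, smul_eq_mul, htr' b₁ b₂]
      set c := CFC.sqrt a with hcdef
      have hcc : c * c = a := CFC.sqrt_mul_sqrt_self a ha
      have hcsa : IsSelfAdjoint c := IsSelfAdjoint.of_nonneg (CFC.sqrt_nonneg _)
      set d := CFC.sqrt (1 - a) with hddef
      have hdd : d * d = 1 - a := CFC.sqrt_mul_sqrt_self _ ha'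
      have hdsa : IsSelfAdjoint d := IsSelfAdjoint.of_nonneg (CFC.sqrt_nonneg _)
      have hrne : (r:ℂ) ≠ 0 := by exact_mod_cast ne_of_gt hr0'
      have hrne1 : ((1 - r : ℝ):ℂ) ≠ 0 := by
        rw [Ne, Complex.ofReal_eq_zero]; linarith
      have hT1 : IsTracialState (((r⁻¹:ℝ):ℂ) • S (ιA (c * c))) := by
        apply mkTS c r⁻¹ (by positivity) hcsa
        rw [hcc, htr]
        push_cast
        rw [inv_mul_cancel₀ hrne]
      have hT2 : IsTracialState ((((1-r)⁻¹:ℝ):ℂ) • S (ιA (d * d))) := by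
        apply mkTS d (1-r)⁻¹ (inv_nonneg.mpr (by linarith)) hdsa
        have hne' : ((1:ℂ) - (r:ℂ)) ≠ 0 := by
          intro hq
          have : ((1 - r : ℝ) : ℂ) = 0 := by push_cast; rw [← hq]
          exact hrne1 this
        rw [hdd, hsum, htr]
        push_cast
        rw [inv_mul_cancel₀ hne']
      have hconv : ∀ x : B, (τ ∘ₗ ιB.toAlgHom.toLinearMap) x
          = (r : ℂ) * ((((r⁻¹:ℝ):ℂ) • S (ιA (c * c))) x)
            + ((1:ℂ) - r) * (((((1-r)⁻¹:ℝ):ℂ) • S (ιA (d * d))) x) := by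
        intro x
        have e1 : (((r⁻¹:ℝ):ℂ) • S (ιA (c * c))) x = ((r:ℂ))⁻¹ * τ (ιA a * ιB x) := by
          rw [LinearMap.smul_apply, hS, smul_eq_mul, hcc]; push_cast; ring
        have e2 : ((((1-r)⁻¹:ℝ):ℂ) • S (ιA (d * d))) x
            = (((1:ℂ) - r))⁻¹ * τ (ιA (1 - a) * ιB x) := by
          rw [LinearMap.smul_apply, hS, smul_eq_mul, hdd]; push_cast; ring
        rw [e1, e2]
        have hsplit : τ (ιA a * ιB x) + τ (ιA (1 - a) * ιB x) = τ (ιB x) := by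
          rw [← map_add, ← add_mul, ← map_add, add_sub_cancel, map_one, one_mul]
        have h1 : (r:ℂ) * (((r:ℂ))⁻¹ * τ (ιA a * ιB x)) = τ (ιA a * ιB x) := by
          rw [← mul_assoc, mul_inv_cancel₀ hrne, one_mul]
        have h2 : ((1:ℂ) - r) * ((((1:ℂ) - r))⁻¹ * τ (ιA (1 - a) * ιB x))
            = τ (ιA (1 - a) * ιB x) := by
          have : ((1:ℂ) - r) ≠ 0 := by
            intro hcon; apply hrne1; rw [← hcon]; push_cast; ring
          rw [← mul_assoc, mul_inv_cancel₀ this, one_mul]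
        rw [h1, h2]
        show τ (ιB x) = _
        rw [hsplit]
      have heq := hres.2 _ _ hT1 hT2 r hr0' hr1' hconv
      -- conclude
      have hb := hconv b
      rw [heq] at hb
      have e2 : ((((1-r)⁻¹:ℝ):ℂ) • S (ιA (d * d))) b
          = (((1:ℂ) - r))⁻¹ * τ (ιA (1 - a) * ιB b) := by
        rw [LinearMap.smul_apply, hS, smul_eq_mul, hdd]; push_cast; ring
      have e1 : (((r⁻¹:ℝ):ℂ) • S (ιA (c * c))) b = ((r:ℂ))⁻¹ * τ (ιA a * ιB b) := by
        rw [LinearMap.smul_apply, hS, smul_eq_mul, hcc]; push_cast; ring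
      rw [← heq, e1] at hb
      have hbL : (τ ∘ₗ ιB.toAlgHom.toLinearMap) b = τ (ιB b) := rfl
      rw [hbL] at hb
      -- hb : τ (ιB b) = r * (r⁻¹ * τ (ιA a * ιB b)) + (1-r) * (r⁻¹ * τ (ιA a * ιB b))
      have h3 : τ (ιB b) = ((r:ℂ))⁻¹ * τ (ιA a * ιB b) := by
        rw [hb]; ring
      rw [htr, h3, ← mul_assoc, mul_inv_cancel₀ hrne, one_mul]
  -- extend to all nonneg a
  have P2 : ∀ a : A, 0 ≤ a → ∀ b : B, τ (ιA a * ιB b) = τ (ιA a) * τ (ιB b) := by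
    intro a ha b
    rcases eq_or_ne a 0 with rfl | hne
    · simp
    · have hnorm : 0 < ‖a‖ := norm_pos_iff.mpr hne
      set k := ‖a‖⁻¹ with hkdef
      have hk : 0 < k := by positivity
      have ha' : (0:A) ≤ (k:ℂ) • a := by
        have hcc : CFC.sqrt a * CFC.sqrt a = a := CFC.sqrt_mul_sqrt_self a ha
        have hcsa : IsSelfAdjoint (CFC.sqrt a) := IsSelfAdjoint.of_nonneg (CFC.sqrt_nonneg _)
        have hm : ((Real.sqrt k : ℂ)) * ((Real.sqrt k : ℂ)) = (k:ℂ) := by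
          rw [← Complex.ofReal_mul, Real.mul_self_sqrt hk.le]
        have : (k:ℂ) • a = star (((Real.sqrt k : ℂ)) • CFC.sqrt a)
            * (((Real.sqrt k : ℂ)) • CFC.sqrt a) := by
          rw [star_smul, hcsa.star_eq, smul_mul_smul_comm, hcc, Complex.star_def,
            Complex.conj_ofReal, hm]
        rw [this]
        exact star_mul_self_nonneg _
      have hle : (k:ℂ) • a ≤ 1 := by
        rw [← CStarAlgebra.norm_le_one_iff_of_nonneg _ ha']
        rw [norm_smul]
        simp only [Complex.norm_real, Real.norm_eq_abs, abs_of_pos hk, hkdef]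
        rw [abs_of_pos (inv_pos.mpr hnorm), inv_mul_cancel₀ hnorm.ne']
      have h := P _ ha' hle b
      simp only [map_smul, smul_mul_assoc, smul_eq_mul] at h
      have hkne : ((k:ℝ):ℂ) ≠ 0 := by exact_mod_cast hk.ne'
      apply mul_left_cancel₀ hkne
      rw [h]; ring
  -- selfadjoint case
  have P3 : ∀ h : A, IsSelfAdjoint h → ∀ b : B, τ (ιA h * ιB b) = τ (ιA h) * τ (ιB b) := by
    intro h hh b
    set p := algebraMap ℝ A ‖h‖ + h with hpdef
    have hppos : (0:A) ≤ p := by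
      have h1 := IsSelfAdjoint.neg_algebraMap_norm_le_self hh
      rw [hpdef]
      exact neg_le_iff_add_nonneg.mp (neg_le.mp h1)
    have halg : algebraMap ℝ A ‖h‖ = ((‖h‖ : ℂ)) • (1:A) := by
      rw [Algebra.algebraMap_eq_smul_one]
      rw [← algebraMap_smul ℂ (‖h‖ : ℝ) (1:A), Complex.coe_algebraMap]
    have hP2 := P2 p hppos b
    rw [hpdef, halg] at hP2
    simp only [map_add, map_smul, add_mul, smul_mul_assoc, map_one, one_mul,
      smul_eq_mul, hτ1] at hP2
    linear_combination hP2
  -- general case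
  intro a b
  have hI2 : Complex.I * (-(Complex.I/2)) = 2⁻¹ := by
    linear_combination (-2⁻¹ : ℂ) * Complex.I_mul_I
  set h := (2⁻¹:ℂ) • (a + star a) with hhdef
  set k := (-(Complex.I/2)) • (a - star a) with hkdef
  have hhsa : IsSelfAdjoint h := by
    show star h = h
    rw [hhdef, star_smul, star_add, star_star, Complex.star_def]
    rw [show (starRingEnd ℂ) (2⁻¹:ℂ) = (2⁻¹:ℂ) by simp [map_ofNat]]
    rw [add_comm (star a) a]
  have hksa : IsSelfAdjoint k := by
    show star k = k
    rw [hkdef, star_smul, star_sub, star_star, Complex.star_def]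
    rw [show (starRingEnd ℂ) (-(Complex.I/2)) = Complex.I/2 by simp [map_ofNat, neg_div, neg_neg]]
    rw [show (Complex.I/2) • (star a - a) = (-(Complex.I/2)) • (a - star a) by
      rw [neg_smul, ← smul_neg, neg_sub]]
  have hdecomp : a = h + Complex.I • k := by
    rw [hhdef, hkdef, smul_smul, hI2]
    module
  rw [hdecomp]
  simp only [map_add, map_smul, add_mul, smul_mul_assoc, smul_eq_mul]
  rw [P3 h hhsa b, P3 k hksa b]
  ring
end Main


/-- Let `A`, `B` be unital C*-algebras and `τ` a tracial state on a C*-tensor product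
`C = A ⊗ B` (realized by commuting unital embeddings `ιA, ιB` with dense joint span).
If the restriction of `τ` to `1 ⊗ B` is an extreme tracial state of `B`, then
`τ(a ⊗ b) = τ(a ⊗ 1) · τ(1 ⊗ b)` for all `a ∈ A`, `b ∈ B`. -/
theorem stmt_8 {A B C : Type*}
    [NormedRing A] [StarRing A] [CStarRing A] [NormedAlgebra ℂ A] [StarModule ℂ A]
    [CompleteSpace A]
    [NormedRing B] [StarRing B] [CStarRing B] [NormedAlgebra ℂ B] [StarModule ℂ B]
    [CompleteSpace B]
    [NormedRing C] [StarRing C] [CStarRing C] [NormedAlgebra ℂ C] [StarModule ℂ C]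
    [CompleteSpace C]
    (ιA : A →⋆ₐ[ℂ] C) (ιB : B →⋆ₐ[ℂ] C)
    (hcomm : ∀ (a : A) (b : B), ιA a * ιB b = ιB b * ιA a)
    (hdense : Dense (↑(Submodule.span ℂ {x : C | ∃ (a : A) (b : B), x = ιA a * ιB b}) : Set C))
    (τ : C →ₗ[ℂ] ℂ) (hτ : IsTracialState τ)
    (hres : IsExtremeTracialState (τ ∘ₗ ιB.toAlgHom.toLinearMap)) :
    ∀ (a : A) (b : B), τ (ιA a * ιB b) = τ (ιA a) * τ (ιB b) := by
  letI : CStarAlgebra A := { }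
  letI : CStarAlgebra B := { }
  letI : CStarAlgebra C := { }
  letI := CStarAlgebra.spectralOrder A
  haveI := CStarAlgebra.spectralOrderedRing A
  exact main_aux ιA ιB hcomm τ hτ hres
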